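/- Fix reals S_A>0, θ≥0, λ with 0<λ<λ_th, an integer B≥1, and a prior variance V with 0 < V ≤ v_th(λ,0). Then f(ζ,S_M) ≥ V for all ζ≥0 and S_M≥0; since f(0,0)=V, the pair (0,0) is a global minimizer of f over [0,∞)×[0,∞). -/

import Mathlib

/-- Posterior variance update: `ν̂(V,Λ) = V/(1+V·Λ)`. -/
noncomputable def nuhat (V Lam : ℝ) : ℝ := V / (1 + V * Lam)

/-- Decentralized myopic cost `f(ζ,S_M)` with success probability
`ρ(ζ) = ζ·e^{−ζ}` and `B` channels. -/
noncomputable def fdec (SA th lam V : ℝ) (B : ℕ) (zeta SM : ℝ) : ℝ :=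
  (∑ r ∈ Finset.range (B + 1),
    (B.choose r : ℝ) * (zeta * Real.exp (-zeta)) ^ r *
      (1 - zeta * Real.exp (-zeta)) ^ (B - r) *
      nuhat V ((r : ℝ) * SA * SM / (SA + SM))) +
  lam * zeta * (B : ℝ) * (1 + th * SM)

/-- The threshold `v_th(λ,0)`. -/
noncomputable def vth0 (SA th lam : ℝ) : ℝ :=
  Real.sqrt (lam * th) + lam / 2 +
    Real.sqrt lam * Real.sqrt (Real.sqrt (lam * th) + lam / 4 + 1 / SA)

lemma sum_binom (p q : ℝ) (B : ℕ) :
    ∑ r ∈ Finset.range (B + 1), (B.choose r : ℝ) * p ^ r * q ^ (B - r) = (p + q) ^ B := by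
  rw [add_pow]
  exact Finset.sum_congr rfl fun r _ => by ring

lemma sum_binom_mean (p q : ℝ) (B : ℕ) :
    ∑ r ∈ Finset.range (B + 1 + 1),
      (r : ℝ) * ((B + 1).choose r : ℝ) * p ^ r * q ^ (B + 1 - r)
      = (B + 1 : ℝ) * p * (p + q) ^ B := by
  rw [Finset.sum_range_succ']
  simp only [Nat.cast_zero, zero_mul]
  rw [add_zero]
  have key : ∀ s : ℕ, ((s + 1 : ℕ) : ℝ) * ((B + 1).choose (s + 1) : ℝ)
      = (B + 1 : ℝ) * (B.choose s : ℝ) := by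
    intro s
    have h := Nat.add_one_mul_choose_eq B s
    have h' : ((B.succ * B.choose s : ℕ) : ℝ) = ((B.succ.choose s.succ * s.succ : ℕ) : ℝ) := by
      exact_mod_cast congrArg (Nat.cast : ℕ → ℝ) h
    push_cast at h'
    have hs : B.succ.choose s.succ = (B+1).choose (s+1) := rfl
    push_cast [hs] at h'
    push_cast
    linarith
  calc ∑ s ∈ Finset.range (B + 1),
        ((s + 1 : ℕ) : ℝ) * ((B + 1).choose (s + 1) : ℝ) * p ^ (s + 1) * q ^ (B + 1 - (s + 1))
      = ∑ s ∈ Finset.range (B + 1), (B + 1 : ℝ) * p * ((B.choose s : ℝ) * p ^ s * q ^ (B - s)) := by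
        apply Finset.sum_congr rfl
        intro s _
        rw [key s, Nat.add_sub_add_right]
        ring
    _ = (B + 1 : ℝ) * p * (p + q) ^ B := by rw [← Finset.mul_sum, sum_binom]

lemma key_quad (lam th SA t sL sE S : ℝ) (hSA : 0 < SA) (hth : 0 ≤ th) (hlam : 0 < lam)
    (ht0 : 0 ≤ t) (ht2 : t^2 = lam*th) (hL0 : 0 ≤ sL) (hL2 : sL^2 = lam)
    (hsE0 : 0 ≤ sE) (hE2 : sE^2 = t + lam/4 + 1/SA) :
    (t + lam/2 + sL*sE)^2 * (SA*S) ≤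
      lam*(1+th*S)*((SA+S) + (t+lam/2+sL*sE)*(SA*S)) := by
  set W := t + lam/2 + sL*sE with hWdef
  have hW0 : 0 ≤ W := by
    have : 0 ≤ sL*sE := mul_nonneg hL0 hsE0
    rw [hWdef]; linarith
  have hW2SA : (W - t)^2 * SA = lam*W*SA + lam := by
    have hESA : sE^2 * SA = t*SA + lam*SA/4 + 1 := by
      rw [hE2]; field_simp
    rw [hWdef]
    linear_combination (sE^2*SA)*hL2 + lam*hESA
  have hWt : 0 ≤ W - t := by
    rw [hWdef]
    nlinarith [mul_nonneg hL0 hsE0]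
  set a := lam*th*(1+W*SA) with hadef
  set c := lam*SA with hcdef
  have h1W : (0:ℝ) ≤ 1 + W*SA := by nlinarith
  have ha0 : 0 ≤ a := by rw [hadef]; exact mul_nonneg (mul_nonneg hlam.le hth) h1W
  have hc0 : 0 ≤ c := by rw [hcdef]; positivity
  have hsa2 : Real.sqrt a ^ 2 = a := Real.sq_sqrt ha0
  have hsc2 : Real.sqrt c ^ 2 = c := Real.sq_sqrt hc0
  have hacsq : a * c = ((W-t)*t*SA)^2 := by
    rw [hadef, hcdef]
    linear_combination (-(t^2*SA))*hW2SA + (-(lam*W*SA^2+lam*SA))*ht2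
  have hWt0 : 0 ≤ (W-t)*t*SA := mul_nonneg (mul_nonneg hWt ht0) hSA.le
  have hac : Real.sqrt a * Real.sqrt c = (W-t)*t*SA := by
    rw [← Real.sqrt_mul ha0, hacsq, Real.sqrt_sq hWt0]
  have hfinal : lam*(1+th*S)*((SA+S) + W*(SA*S)) - W^2*(SA*S)
      = (Real.sqrt a * S - Real.sqrt c)^2 := by
    linear_combination (-(S^2))*hsa2 + (-(S^2))*hadef - hsc2 - hcdef + (2*S)*hac
      + (-S)*hW2SA + (-(S*SA))*ht2
  nlinarith [hfinal, sq_nonneg (Real.sqrt a * S - Real.sqrt c)]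

lemma key_V (SA th lam V S : ℝ) (hSA : 0 < SA) (hth : 0 ≤ th) (hlam : 0 < lam)
    (hS : 0 ≤ S) (hV : 0 < V) (hVth : V ≤ vth0 SA th lam) :
    V^2*(SA*S) ≤ lam*(1+th*S)*((SA+S) + V*(SA*S)) := by
  have hkW : (vth0 SA th lam)^2*(SA*S) ≤
      lam*(1+th*S)*((SA+S) + vth0 SA th lam*(SA*S)) := by
    unfold vth0
    exact key_quad lam th SA _ _ _ S hSA hth hlam (Real.sqrt_nonneg _)
      (Real.sq_sqrt (mul_nonneg hlam.le hth)) (Real.sqrt_nonneg _) (Real.sq_sqrt hlam.le)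
      (Real.sqrt_nonneg _) (Real.sq_sqrt (by positivity))
  set W := vth0 SA th lam with hW
  have hW0 : 0 < W := by
    rw [hW]; unfold vth0
    have h1 : 0 ≤ Real.sqrt (lam*th) := Real.sqrt_nonneg _
    have h2 : 0 ≤ Real.sqrt lam * Real.sqrt (Real.sqrt (lam * th) + lam / 4 + 1 / SA) :=
      mul_nonneg (Real.sqrt_nonneg _) (Real.sqrt_nonneg _)
    linarith
  have hΛ : 0 ≤ SA*S := mul_nonneg hSA.le hS
  have hWV : 0 ≤ W - V := sub_nonneg.2 hVth
  have hP : 0 ≤ SA + S := by linarith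
  have hts : (0:ℝ) ≤ 1 + th*S := by nlinarith
  have step1 : V^2*(SA*S)*W ≤ V*(W^2*(SA*S)) := by
    nlinarith [mul_nonneg (mul_nonneg (mul_nonneg hWV hV.le) hW0.le) hΛ]
  have step2 : V*(W^2*(SA*S)) ≤ V*(lam*(1+th*S)*((SA+S)+W*(SA*S))) :=
    mul_le_mul_of_nonneg_left hkW hV.le
  have step3 : V*(lam*(1+th*S)*((SA+S)+W*(SA*S))) ≤ (lam*(1+th*S)*((SA+S)+V*(SA*S)))*W := by
    nlinarith [mul_nonneg (mul_nonneg (mul_nonneg hlam.le hts) hWV) hP]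
  exact le_of_mul_le_mul_right (le_trans (le_trans step1 step2) step3) hW0

set_option maxHeartbeats 2000000 in
/-- if `0 < V ≤ v_th(λ,0)`, then `f(ζ,S_M) ≥ V` on `[0,∞)²` and
`f(0,0) = V`, i.e. `(0,0)` globally minimizes `f`. -/
theorem stmt_17 (SA th lam V : ℝ) (hSA : 0 < SA) (hth : 0 ≤ th)
    (hlam : 0 < lam)
    (hlt : lam < 1 / (Real.sqrt (1 + 1 / SA) + Real.sqrt th) ^ 2)
    (B : ℕ) (hB : 1 ≤ B) (hV : 0 < V) (hVth : V ≤ vth0 SA th lam) :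
    (∀ zeta SM : ℝ, 0 ≤ zeta → 0 ≤ SM → fdec SA th lam V B zeta SM ≥ V) ∧
      fdec SA th lam V B 0 0 = V := by
  constructor
  · intro zeta SM hz hSM
    obtain ⟨B', rfl⟩ : ∃ n, B = n + 1 := ⟨B - 1, (Nat.succ_pred_eq_of_pos hB).symm⟩
    simp only [fdec, ge_iff_le]
    have hP : 0 < SA + SM := by linarith
    set Λ := SA*SM/(SA+SM) with hΛdef
    have hΛ0 : 0 ≤ Λ := div_nonneg (mul_nonneg hSA.le hSM) hP.le
    have hρ0 : 0 ≤ zeta * Real.exp (-zeta) := mul_nonneg hz (Real.exp_pos _).le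
    have hρ1 : zeta * Real.exp (-zeta) ≤ 1 := by
      have h := Real.add_one_le_exp zeta
      have hmul : Real.exp zeta * Real.exp (-zeta) = 1 := by
        rw [← Real.exp_add]; simp
      nlinarith [(Real.exp_pos (-zeta)).le]
    have hρζ : zeta * Real.exp (-zeta) ≤ zeta := by
      have h1 : Real.exp (-zeta) ≤ 1 := Real.exp_le_one_iff.2 (neg_nonpos.2 hz)
      nlinarith
    set ρ := zeta * Real.exp (-zeta) with hρdef
    set D := V^2*Λ/(1+V*Λ) with hDdef
    have hden : 0 < 1 + V*Λ := by nlinarith [mul_nonneg hV.le hΛ0]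
    have hD0 : 0 ≤ D := div_nonneg (mul_nonneg (sq_nonneg V) hΛ0) hden.le
    have hDle : D ≤ lam*(1+th*SM) := by
      rw [hDdef, div_le_iff₀ hden]
      have hk := key_V SA th lam V SM hSA hth hlam hSM hV hVth
      have hΛP : Λ*(SA+SM) = SA*SM := div_mul_cancel₀ _ hP.ne'
      have h1 : V^2*Λ*(SA+SM) = V^2*(SA*SM) := by rw [mul_assoc, hΛP]
      have h2 : (1+V*Λ)*(SA+SM) = (SA+SM) + V*(SA*SM) := by
        rw [add_mul, one_mul, mul_assoc, hΛP]
      apply le_of_mul_le_mul_right _ hP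
      rw [h1, mul_assoc (lam*(1+th*SM)), h2]
      exact hk
    have hterm : ∀ r ∈ Finset.range (B'+1+1),
        ((B'+1).choose r : ℝ)*ρ^r*(1-ρ)^(B'+1-r)*(V - (r:ℝ)*D)
          ≤ ((B'+1).choose r : ℝ)*ρ^r*(1-ρ)^(B'+1-r)* nuhat V ((r:ℝ)*SA*SM/(SA+SM)) := by
      intro r _
      have hw : 0 ≤ ((B'+1).choose r : ℝ)*ρ^r*(1-ρ)^(B'+1-r) :=
        mul_nonneg (mul_nonneg (Nat.cast_nonneg _) (pow_nonneg hρ0 _))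
          (pow_nonneg (by linarith) _)
      have hrΛ : (r:ℝ)*SA*SM/(SA+SM) = (r:ℝ)*Λ := by rw [hΛdef]; ring
      have hnu : V - (r:ℝ)*D ≤ nuhat V ((r:ℝ)*SA*SM/(SA+SM)) := by
        rw [nuhat, hrΛ]
        have hr0 : (0:ℝ) ≤ (r:ℝ) := Nat.cast_nonneg r
        have hdenr : 0 < 1 + V*((r:ℝ)*Λ) := by
          nlinarith [mul_nonneg hV.le (mul_nonneg hr0 hΛ0)]
        rw [le_div_iff₀ hdenr]
        have hrr : (r:ℝ) ≤ (r:ℝ)^2 := by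
          rcases Nat.eq_zero_or_pos r with h|h
          · simp [h]
          · have : (1:ℝ) ≤ (r:ℝ) := by exact_mod_cast h
            nlinarith
        have hDden : D*(1+V*Λ) = V^2*Λ := by
          rw [hDdef]; field_simp
        have hDVΛ : 0 ≤ D*(V*Λ) := mul_nonneg hD0 (mul_nonneg hV.le hΛ0)
        nlinarith [hDden, hrr, hDVΛ, hr0, hD0]
      exact mul_le_mul_of_nonneg_left hnu hw
    have hsum : ∑ r ∈ Finset.range (B'+1+1),
        ((B'+1).choose r : ℝ)*ρ^r*(1-ρ)^(B'+1-r)*(V - (r:ℝ)*D)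
          = V - D*((B'+1:ℝ)*ρ) := by
      have e1 := sum_binom ρ (1-ρ) (B'+1)
      have e2 := sum_binom_mean ρ (1-ρ) B'
      have hρq : ρ + (1-ρ) = 1 := by ring
      rw [hρq, one_pow] at e1 e2
      calc ∑ r ∈ Finset.range (B'+1+1),
            ((B'+1).choose r : ℝ)*ρ^r*(1-ρ)^(B'+1-r)*(V - (r:ℝ)*D)
          = ∑ r ∈ Finset.range (B'+1+1),
            (V * (((B'+1).choose r : ℝ)*ρ^r*(1-ρ)^(B'+1-r))
              - D * ((r:ℝ)*((B'+1).choose r : ℝ)*ρ^r*(1-ρ)^(B'+1-r))) := by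
            exact Finset.sum_congr rfl fun r _ => by ring
        _ = V * (∑ r ∈ Finset.range (B'+1+1),
              ((B'+1).choose r : ℝ)*ρ^r*(1-ρ)^(B'+1-r))
            - D * (∑ r ∈ Finset.range (B'+1+1),
              (r:ℝ)*((B'+1).choose r : ℝ)*ρ^r*(1-ρ)^(B'+1-r)) := by
            rw [Finset.sum_sub_distrib, Finset.mul_sum, Finset.mul_sum]
        _ = V - D*((B'+1:ℝ)*ρ) := by rw [e1, e2]; ring
    clear_value ρ Λ D
    have hge := le_trans hsum.ge (Finset.sum_le_sum hterm)
    have hlast : D*((B'+1:ℝ)*ρ) ≤ lam*zeta*((B'+1:ℕ):ℝ)*(1+th*SM) := by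
      have h1 : D*ρ ≤ (lam*(1+th*SM))*zeta := by
        calc D*ρ ≤ D*zeta := mul_le_mul_of_nonneg_left hρζ hD0
          _ ≤ (lam*(1+th*SM))*zeta := mul_le_mul_of_nonneg_right hDle hz
      have hn : (0:ℝ) ≤ (B':ℝ)+1 := by positivity
      have h2 := mul_le_mul_of_nonneg_left h1 hn
      have hc : ((B'+1:ℕ):ℝ) = (B':ℝ)+1 := by push_cast; ring
      rw [hc]
      nlinarith [h2]
    linarith [hge, hlast]
  · simp only [fdec]
    have h : ∀ r ∈ Finset.range (B+1),
        (B.choose r : ℝ) * (0 * Real.exp (-0)) ^ r * (1 - 0 * Real.exp (-0)) ^ (B - r) *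
          nuhat V ((r : ℝ) * SA * 0 / (SA + 0))
        = ((B.choose r : ℝ) * (0:ℝ) ^ r * (1:ℝ) ^ (B - r)) * V := fun r _ => by
      rw [nuhat]; norm_num
    rw [Finset.sum_congr rfl h, ← Finset.sum_mul, sum_binom]
    norm_num
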